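/- arXiv:2301.12998 — 6 statements merged into one kernel-verified Lean document; each statement's English description precedes it below -/
import Mathlib

section
/- Let Ω ⊆ ℝ^D be measurable with Lebesgue measure |Ω| > 0, let x_1,…,x_N ∈ Ω be distinct points, and let φ_1,…,φ_N : Ω → ℝ satisfy φ_n(x_m) = δ_{mn} for all m,n ∈ {1,…,N} (which holds for translated compactly supported radial kernels with nonoverlapping supports). Let p_1,…,p_K : Ω → ℝ satisfy the discrete orthonormality [p_k,p_l]_{X_N} = δ_{kl} for all k,l ∈ {1,…,K}. For m ∈ {1,…,N} define c_m(x) = φ_m(x) − (|Ω|/N) Σ_{n=1}^N (Σ_{k=1}^K p_k(x_m) p_k(x_n)) φ_n(x) + (|Ω|/N) Σ_{k=1}^K p_k(x_m) p_k(x). Then: (i) c_m(x_n) = δ_{mn} for all n ∈ {1,…,N} (the cardinal property), and (ii) the coefficients α_n^{(m)} = δ_{mn} − (|Ω|/N) Σ_{k=1}^K p_k(x_m) p_k(x_n) satisfy Σ_{n=1}^N α_n^{(m)} p_l(x_n) = 0 for every l ∈ {1,…,K} (the moment side conditions of RBF interpolation). Hence c_m is the m-th cardinal function of the RBF interpolation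 process. -/
open MeasureTheory

/-- **Explicit representation of the cardinal functions** of RBF interpolation with
compactly supported kernels with nonoverlapping supports (so that `φₙ(xₘ) = δₘₙ`)
and a discretely orthonormal polynomial basis `p₁, …, p_K`:
the function
`c_m(x) = φ_m(x) − (|Ω|/N) Σₙ (Σₖ pₖ(xₘ) pₖ(xₙ)) φₙ(x) + (|Ω|/N) Σₖ pₖ(xₘ) pₖ(x)`
satisfies the cardinal property `c_m(xₙ) = δₘₙ`, and its kernel coefficients
`αₙ⁽ᵐ⁾ = δₘₙ − (|Ω|/N) Σₖ pₖ(xₘ) pₖ(xₙ)` satisfy the moment side conditions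
`Σₙ αₙ⁽ᵐ⁾ p_l(xₙ) = 0`. -/
theorem cardinal_function_explicit_representation
    (D N K : ℕ) (Ω : Set (EuclideanSpace ℝ (Fin D))) (hΩ : MeasurableSet Ω)
    (hvol : 0 < (volume Ω).toReal)
    (x : Fin N → EuclideanSpace ℝ (Fin D)) (hx : ∀ n, x n ∈ Ω)
    (hdist : Function.Injective x)
    (φ : Fin N → EuclideanSpace ℝ (Fin D) → ℝ)
    (hφ : ∀ m n : Fin N, φ n (x m) = if m = n then 1 else 0)
    (p : Fin K → EuclideanSpace ℝ (Fin D) → ℝ)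
    (hp : ∀ k l : Fin K,
      ((volume Ω).toReal / N) * ∑ n, p k (x n) * p l (x n) = if k = l then 1 else 0) :
    ∀ m : Fin N,
      (∀ n : Fin N,
        (φ m (x n)
          - ((volume Ω).toReal / N) *
              ∑ n' : Fin N, (∑ k, p k (x m) * p k (x n')) * φ n' (x n)
          + ((volume Ω).toReal / N) * ∑ k, p k (x m) * p k (x n))
          = if m = n then 1 else 0) ∧
      (∀ l : Fin K,
        ∑ n : Fin N,
          ((if m = n then (1:ℝ) else 0)
            - ((volume Ω).toReal / N) * ∑ k, p k (x m) * p k (x n)) * p l (x n) = 0) := by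
  intro m
  set V : ℝ := (volume Ω).toReal / N with hV
  constructor
  · intro n
    have hmid : ∑ n' : Fin N, (∑ k, p k (x m) * p k (x n')) * φ n' (x n)
        = ∑ k, p k (x m) * p k (x n) := by
      rw [Finset.sum_eq_single n]
      · rw [hφ n n, if_pos rfl, mul_one]
      · intro b _ hb
        rw [hφ n b, if_neg (fun h => hb h.symm), mul_zero]
      · intro h; exact absurd (Finset.mem_univ n) h
    rw [hmid, hφ n m]
    have heq : (if n = m then (1:ℝ) else 0) = if m = n then 1 else 0 := by
      by_cases h : m = n
      · simp [h]
      · rw [if_neg h, if_neg (fun h' => h h'.symm)]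
    rw [← heq]; ring
  · intro l
    have hexp : ∀ n : Fin N,
        ((if m = n then (1:ℝ) else 0) - V * ∑ k, p k (x m) * p k (x n)) * p l (x n)
        = (if m = n then (1:ℝ) else 0) * p l (x n)
          - V * ∑ k, p k (x m) * (p k (x n) * p l (x n)) := by
      intro n
      rw [sub_mul, mul_assoc, Finset.sum_mul]
      simp only [mul_assoc]
    simp only [hexp]
    rw [Finset.sum_sub_distrib]
    have h1 : ∑ n : Fin N, (if m = n then (1:ℝ) else 0) * p l (x n) = p l (x m) := by
      rw [Finset.sum_eq_single m]
      · rw [if_pos rfl, one_mul]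
      · intro b _ hb; rw [if_neg (fun h => hb h.symm), zero_mul]
      · intro h; exact absurd (Finset.mem_univ m) h
    rw [h1, ← Finset.mul_sum, Finset.sum_comm]
    have : V * ∑ k, ∑ n, p k (x m) * (p k (x n) * p l (x n))
        = ∑ k, p k (x m) * (V * ∑ n, p k (x n) * p l (x n)) := by
      rw [Finset.mul_sum]
      refine Finset.sum_congr rfl fun k _ => ?_
      rw [Finset.mul_sum, Finset.mul_sum, Finset.mul_sum]
      refine Finset.sum_congr rfl fun n _ => ?_
      ring
    rw [this]
    have : ∑ k, p k (x m) * (V * ∑ n, p k (x n) * p l (x n))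
        = ∑ k, p k (x m) * (if k = l then (1:ℝ) else 0) := by
      congr 1; ext k; rw [hp k l]
    rw [this]
    simp
end

section
/- Let Ω ⊆ ℝ^D be a bounded measurable set with Lebesgue measure |Ω| > 0, let d ∈ ℕ, and let (x_n)_{n∈ℕ} be a sequence of points in Ω such that for all polynomial functions u, v of degree at most d on ℝ^D one has lim_{N→∞} (|Ω|/N) Σ_{n=1}^N u(x_n) v(x_n) = ∫_Ω u(x) v(x) dx (which holds in particular when (x_n) is equidistributed in Ω). Let K ∈ ℕ, and for each N let p_1^{(N)},…,p_K^{(N)} be polynomial functions of degree at most d satisfying the discrete orthonormality [p_k^{(N)}, p_l^{(N)}]_{X_N} = δ_{kl} for all k,l ∈ {1,…,K}. Then lim_{N→∞} ∫_Ω p_k^{(N)}(x) p_l^{(N)}(x) dx = δ_{kl} for all k,l ∈ {1,…,K}. -/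
open MeasureTheory Filter

lemma mvpoly_null : ∀ (n : ℕ) (p : MvPolynomial (Fin n) ℝ), p ≠ 0 →
    volume {y : Fin n → ℝ | MvPolynomial.eval y p = 0} = 0 := by
  intro n
  induction n with
  | zero =>
      intro p hp
      obtain ⟨c, rfl⟩ := MvPolynomial.C_surjective (Fin 0) p
      have hc : c ≠ 0 := fun h => hp (by simp [h])
      have : {y : Fin 0 → ℝ | MvPolynomial.eval y (MvPolynomial.C c) = 0} = ∅ := by
        ext y; simp [hc]
      rw [this, measure_empty]
  | succ n ih =>
      intro p hp
      set q := MvPolynomial.finSuccEquiv ℝ n p with hqdef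
      have hq0 : q ≠ 0 := by
        simp only [hqdef, ne_eq, EmbeddingLike.map_eq_zero_iff]
        exact hp
      obtain ⟨j, hj⟩ : ∃ j, q.coeff j ≠ 0 := by
        by_contra h; push_neg at h
        exact hq0 (Polynomial.ext fun j => by simp [h j])
      set S : Set (Fin (n+1) → ℝ) := {y | MvPolynomial.eval y p = 0} with hS
      have hSmeas : MeasurableSet S :=
        (isClosed_eq (MvPolynomial.continuous_eval p) continuous_const).measurableSet
      set T : Set ((Fin n → ℝ) × ℝ) := {z | MvPolynomial.eval (Fin.cons z.2 z.1) p = 0} with hT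
      have hTmeas : MeasurableSet T := by
        have hc : Continuous fun z : (Fin n → ℝ) × ℝ => MvPolynomial.eval (Fin.cons z.2 z.1) p := by
          apply (MvPolynomial.continuous_eval p).comp
          refine continuous_pi fun i => ?_
          refine Fin.cases ?_ ?_ i
          · exact continuous_snd
          · intro i; exact (continuous_apply i).comp continuous_fst
        exact (isClosed_eq hc continuous_const).measurableSet
      -- transfer measure
      have hmp := measurePreserving_piFinSuccAbove (fun _ : Fin (n+1) => (volume : Measure ℝ)) 0
      set e := MeasurableEquiv.piFinSuccAbove (fun _ : Fin (n+1) => ℝ) 0 with he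
      have hsymm : ∀ z : ℝ × (Fin n → ℝ), e.symm z = Fin.cons z.1 z.2 := by
        intro z; ext i
        simp [he, MeasurableEquiv.piFinSuccAbove, Fin.insertNthEquiv, Fin.insertNth_zero]
      have hpre : e.symm ⁻¹' S = Prod.swap ⁻¹' T := by
        ext z; simp [hS, hT, hsymm z, Prod.swap]
      have h1 : volume S = ((volume : Measure ℝ).prod (volume : Measure (Fin n → ℝ))) (Prod.swap ⁻¹' T) := by
        have h2 := (MeasurePreserving.symm e hmp).measure_preimage (s := S) hSmeas.nullMeasurableSet
        rw [hpre] at h2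
        simp only [← volume_pi] at h2
        exact h2.symm
      have h3 : ((volume : Measure ℝ).prod (volume : Measure (Fin n → ℝ))) (Prod.swap ⁻¹' T)
          = ((volume : Measure (Fin n → ℝ)).prod (volume : Measure ℝ)) T := by
        conv_rhs => rw [← Measure.prod_swap]
        rw [Measure.map_apply measurable_swap hTmeas]
      rw [h1, h3]
      rw [Measure.measure_prod_null hTmeas]
      have hZ : volume {s : Fin n → ℝ | MvPolynomial.eval s (q.coeff j) = 0} = 0 := ih _ hj
      have hZ' : ∀ᵐ s : Fin n → ℝ, MvPolynomial.eval s (q.coeff j) ≠ 0 := by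
        rw [ae_iff]; simpa using hZ
      filter_upwards [hZ'] with s hs
      have hmapne : q.map (MvPolynomial.eval s) ≠ 0 := by
        intro h
        apply hs
        have := Polynomial.ext_iff.mp h j
        simpa [Polynomial.coeff_map] using this
      have : (Prod.mk s ⁻¹' T) = {a : ℝ | (q.map (MvPolynomial.eval s)).IsRoot a} := by
        ext a
        simp only [hT, Set.mem_preimage, Set.mem_setOf_eq, Polynomial.IsRoot]
        rw [MvPolynomial.eval_eq_eval_mv_eval']
      simp only [this]
      exact Set.Finite.measure_zero (Polynomial.finite_setOf_isRoot hmapne) _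

lemma contEvalE (D : ℕ) (p : MvPolynomial (Fin D) ℝ) :
    Continuous fun y : EuclideanSpace ℝ (Fin D) => MvPolynomial.eval (fun i => y i) p :=
  (MvPolynomial.continuous_eval p).comp (PiLp.continuous_ofLp (p := 2) (β := fun _ : Fin D => ℝ))

lemma mvpoly_null_euclid (D : ℕ) (p : MvPolynomial (Fin D) ℝ) (hp : p ≠ 0) :
    volume {y : EuclideanSpace ℝ (Fin D) | MvPolynomial.eval (fun i => y i) p = 0} = 0 := by
  have h := mvpoly_null D p hp
  have hmeas : MeasurableSet {y : Fin D → ℝ | MvPolynomial.eval y p = 0} :=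
    (isClosed_eq (MvPolynomial.continuous_eval p) continuous_const).measurableSet
  have h2 := (EuclideanSpace.volume_preserving_symm_measurableEquiv_toLp (Fin D)).measure_preimage
    hmeas.nullMeasurableSet
  have h3 : (MeasurableEquiv.toLp 2 (Fin D → ℝ)).symm ⁻¹' {y : Fin D → ℝ | MvPolynomial.eval y p = 0}
      = {y : EuclideanSpace ℝ (Fin D) | MvPolynomial.eval (fun i => y i) p = 0} := rfl
  rw [h3] at h2
  rw [h2, h]

lemma integrableOnBounded (D : ℕ) (Ω : Set (EuclideanSpace ℝ (Fin D)))
    (hΩbd : Bornology.IsBounded Ω) {f : EuclideanSpace ℝ (Fin D) → ℝ} (hf : Continuous f) :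
    IntegrableOn f Ω volume :=
  (hf.continuousOn.integrableOn_compact hΩbd.isCompact_closure).mono_set subset_closure

def DIdx (D d : ℕ) : Type := {m : Fin D → Fin (d+1) // ∑ i, (m i : ℕ) ≤ d}

instance (D d : ℕ) : Fintype (DIdx D d) := Subtype.fintype _

noncomputable def dEmb (D d : ℕ) (m : DIdx D d) : Fin D →₀ ℕ :=
  Finsupp.equivFunOnFinite.symm fun i => (m.1 i : ℕ)

lemma dEmb_apply (D d : ℕ) (m : DIdx D d) (i : Fin D) : dEmb D d m i = (m.1 i : ℕ) := by
  simp [dEmb]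

lemma dEmb_inj (D d : ℕ) : Function.Injective (dEmb D d) := by
  intro m m' h
  apply Subtype.ext; funext i
  have := congrArg (fun f => f i) h
  simp only [dEmb_apply] at this
  exact Fin.ext this

lemma dEmb_sum (D d : ℕ) (m : DIdx D d) : ((dEmb D d m).sum fun _ e => e) = ∑ i, (m.1 i : ℕ) := by
  rw [Finsupp.sum_fintype _ _ (fun _ => rfl)]
  simp [dEmb_apply]

lemma dEmb_deg (D d : ℕ) (m : DIdx D d) : ((dEmb D d m).sum fun _ e => e) ≤ d := by
  rw [dEmb_sum]; exact m.2

lemma dEmb_surj (D d : ℕ) (w : Fin D →₀ ℕ) (hw : (w.sum fun _ e => e) ≤ d) :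
    ∃ m : DIdx D d, dEmb D d m = w := by
  have hle : ∀ i, w i ≤ d := by
    intro i
    rw [Finsupp.sum] at hw
    by_cases hi : i ∈ w.support
    · exact le_trans (Finset.single_le_sum (f := fun j => w j) (fun _ _ => Nat.zero_le _) hi) hw
    · simp [Finsupp.notMem_support_iff.mp hi]
  have hsum : (w.sum fun _ e => e) = ∑ i, w i := Finsupp.sum_fintype _ _ (fun _ => rfl)
  refine ⟨⟨fun i => ⟨w i, Nat.lt_succ_of_le (hle i)⟩, ?_⟩, ?_⟩
  · simpa [← hsum] using hw
  · ext i; exact dEmb_apply D d _ i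

lemma evalMono (D : ℕ) (f : Fin D → ℝ) (w : Fin D →₀ ℕ) :
    MvPolynomial.eval f (MvPolynomial.monomial w 1) = ∏ i, f i ^ w i := by
  rw [MvPolynomial.eval_monomial, one_mul, Finsupp.prod_fintype _ _ (fun _ => pow_zero _)]

lemma evalExpand (D d : ℕ) (u : MvPolynomial (Fin D) ℝ) (hu : u.totalDegree ≤ d)
    (f : Fin D → ℝ) :
    MvPolynomial.eval f u = ∑ m : DIdx D d,
      MvPolynomial.coeff (dEmb D d m) u *
        MvPolynomial.eval f (MvPolynomial.monomial (dEmb D d m) 1) := by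
  classical
  simp only [evalMono]
  rw [MvPolynomial.eval_eq']
  have himg : u.support ⊆ Finset.univ.image (dEmb D d) := by
    intro w hw
    obtain ⟨m, hm⟩ := dEmb_surj D d w (le_trans (MvPolynomial.le_totalDegree hw) hu)
    exact Finset.mem_image.2 ⟨m, Finset.mem_univ _, hm⟩
  rw [Finset.sum_subset himg (fun w _ hw => by
    rw [MvPolynomial.notMem_support_iff.mp hw, zero_mul])]
  rw [Finset.sum_image (fun x _ y _ h => dEmb_inj D d h)]

noncomputable def Qm (D d : ℕ) (m : DIdx D d) (y : EuclideanSpace ℝ (Fin D)) : ℝ :=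
  MvPolynomial.eval (fun i => y i) (MvPolynomial.monomial (dEmb D d m) 1)

lemma Qm_cont (D d : ℕ) (m : DIdx D d) : Continuous (Qm D d m) := contEvalE _ _

noncomputable def Amat (D d : ℕ) (Ω : Set (EuclideanSpace ℝ (Fin D))) (m m' : DIdx D d) : ℝ :=
  ∫ y in Ω, Qm D d m y * Qm D d m' y

noncomputable def amat (D d : ℕ) (Ω : Set (EuclideanSpace ℝ (Fin D)))
    (x : ℕ → EuclideanSpace ℝ (Fin D)) (N : ℕ) (m m' : DIdx D d) : ℝ :=
  ((volume Ω).toReal / N) * ∑ n ∈ Finset.range N, Qm D d m (x n) * Qm D d m' (x n)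

lemma gram_int (D d : ℕ) (Ω : Set (EuclideanSpace ℝ (Fin D)))
    (hΩbd : Bornology.IsBounded Ω) (u v : DIdx D d → ℝ) :
    ∫ y in Ω, (∑ m : DIdx D d, u m * Qm D d m y) * (∑ m' : DIdx D d, v m' * Qm D d m' y)
      = ∑ m : DIdx D d, ∑ m' : DIdx D d, u m * v m' * Amat D d Ω m m' := by
  have h1 : ∀ y : EuclideanSpace ℝ (Fin D),
      (∑ m : DIdx D d, u m * Qm D d m y) * (∑ m' : DIdx D d, v m' * Qm D d m' y)
      = ∑ m : DIdx D d, ∑ m' : DIdx D d, (u m * v m') * (Qm D d m y * Qm D d m' y) := by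
    intro y
    rw [Finset.sum_mul_sum]
    exact Finset.sum_congr rfl fun m _ => Finset.sum_congr rfl fun m' _ => by ring
  simp only [h1]
  rw [integral_finset_sum _ (fun m _ => integrable_finset_sum _ (fun m' _ =>
    ((integrableOnBounded D Ω hΩbd (f := fun y => Qm D d m y * Qm D d m' y) ((Qm_cont D d m).mul (Qm_cont D d m'))).const_mul _)))]
  refine Finset.sum_congr rfl fun m _ => ?_
  rw [integral_finset_sum _ (fun m' _ =>
    ((integrableOnBounded D Ω hΩbd (f := fun y => Qm D d m y * Qm D d m' y) ((Qm_cont D d m).mul (Qm_cont D d m'))).const_mul _))]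
  refine Finset.sum_congr rfl fun m' _ => ?_
  rw [MeasureTheory.integral_const_mul]
  rfl

lemma gram_disc (D d : ℕ) (Ω : Set (EuclideanSpace ℝ (Fin D)))
    (x : ℕ → EuclideanSpace ℝ (Fin D)) (N : ℕ) (u v : DIdx D d → ℝ) :
    ((volume Ω).toReal / N) * ∑ n ∈ Finset.range N,
        (∑ m : DIdx D d, u m * Qm D d m (x n)) * (∑ m' : DIdx D d, v m' * Qm D d m' (x n))
      = ∑ m : DIdx D d, ∑ m' : DIdx D d, u m * v m' * amat D d Ω x N m m' := by
  have h1 : ∀ n, (∑ m : DIdx D d, u m * Qm D d m (x n)) * (∑ m' : DIdx D d, v m' * Qm D d m' (x n))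
      = ∑ m : DIdx D d, ∑ m' : DIdx D d, (u m * v m') * (Qm D d m (x n) * Qm D d m' (x n)) := by
    intro n
    rw [Finset.sum_mul_sum]
    exact Finset.sum_congr rfl fun m _ => Finset.sum_congr rfl fun m' _ => by ring
  simp only [h1]
  rw [Finset.sum_comm, Finset.mul_sum]
  refine Finset.sum_congr rfl fun m _ => ?_
  rw [Finset.sum_comm, Finset.mul_sum]
  refine Finset.sum_congr rfl fun m' _ => ?_
  unfold amat
  rw [← Finset.mul_sum]
  ring

lemma gram_posdef (D d : ℕ) (Ω : Set (EuclideanSpace ℝ (Fin D))) (hΩmeas : MeasurableSet Ω)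
    (hΩbd : Bornology.IsBounded Ω) (hvol : 0 < (volume Ω).toReal) :
    ∃ α > 0, ∀ u : DIdx D d → ℝ,
      α * (∑ m : DIdx D d, |u m|)^2 ≤ ∑ m : DIdx D d, ∑ m' : DIdx D d, u m * u m' * Amat D d Ω m m' := by
  classical
  set Φ : (DIdx D d → ℝ) → ℝ :=
    fun u => ∑ m : DIdx D d, ∑ m' : DIdx D d, u m * u m' * Amat D d Ω m m' with hΦ
  have hΦ_int : ∀ u, Φ u = ∫ y in Ω, (∑ m : DIdx D d, u m * Qm D d m y)^2 := by
    intro u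
    rw [hΦ]
    simp only [sq]
    exact (gram_int D d Ω hΩbd u u).symm
  set Sph : Set (DIdx D d → ℝ) := {u | ∑ m : DIdx D d, |u m| = 1} with hSph
  have hcont : Continuous Φ := by
    apply continuous_finset_sum; intro m _; apply continuous_finset_sum; intro m' _
    exact ((continuous_apply m).mul (continuous_apply m')).mul continuous_const
  have hclosed : IsClosed Sph := isClosed_eq (by
    apply continuous_finset_sum; intro m _; exact (continuous_apply m).abs) continuous_const
  have hbdd : Bornology.IsBounded Sph := by
    refine (Metric.isBounded_closedBall (x := (0 : DIdx D d → ℝ)) (r := 1)).subset ?_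
    intro u hu
    rw [Metric.mem_closedBall, dist_zero_right]
    rw [pi_norm_le_iff_of_nonneg zero_le_one]
    intro m
    rw [Real.norm_eq_abs]
    calc |u m| ≤ ∑ m' : DIdx D d, |u m'| :=
          Finset.single_le_sum (f := fun m => |u m|) (fun _ _ => abs_nonneg _) (Finset.mem_univ m)
      _ = 1 := hu
  have hSphcompact : IsCompact Sph := Metric.isCompact_of_isClosed_isBounded hclosed hbdd
  have hSphne : Sph.Nonempty := by
    refine ⟨fun m => if m = ⟨fun _ => 0, by simp⟩ then 1 else 0, ?_⟩
    simp [hSph, apply_ite]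
    rw [Finset.card_eq_one]; exact ⟨⟨fun _ => 0, by simp⟩, by ext; simp; exact Finset.mem_singleton.symm⟩
  obtain ⟨u₀, hu₀S, hmin⟩ := hSphcompact.exists_isMinOn hSphne hcont.continuousOn
  have hαnonneg : 0 ≤ Φ u₀ := by
    rw [hΦ_int]
    exact setIntegral_nonneg hΩmeas fun y _ => sq_nonneg _
  have hαpos : 0 < Φ u₀ := by
    rcases hαnonneg.lt_or_eq with h | h
    · exact h
    exfalso
    -- Φ u₀ = 0 : derive contradiction
    have hg : Continuous fun y => ∑ m : DIdx D d, u₀ m * Qm D d m y := by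
      apply continuous_finset_sum; intro m _; exact continuous_const.mul (Qm_cont D d m)
    have hint : Integrable (fun y => (∑ m : DIdx D d, u₀ m * Qm D d m y)^2) (volume.restrict Ω) :=
      integrableOnBounded D Ω hΩbd (hg.pow 2)
    have hzero : (fun y => (∑ m : DIdx D d, u₀ m * Qm D d m y)^2) =ᵐ[volume.restrict Ω] 0 := by
      rw [← integral_eq_zero_iff_of_nonneg (fun y => sq_nonneg _) hint]
      rw [← hΦ_int]; exact h.symm
    -- the polynomial
    set P : MvPolynomial (Fin D) ℝ := ∑ m : DIdx D d, MvPolynomial.monomial (dEmb D d m) (u₀ m)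
      with hP
    have hPeval : ∀ y : EuclideanSpace ℝ (Fin D),
        MvPolynomial.eval (fun i => y i) P = ∑ m : DIdx D d, u₀ m * Qm D d m y := by
      intro y
      rw [hP, map_sum]
      exact Finset.sum_congr rfl fun m _ => by
        simp [Qm, MvPolynomial.eval_monomial]
    have hPne : P ≠ 0 := by
      obtain ⟨m₁, hm₁⟩ : ∃ m, u₀ m ≠ 0 := by
        by_contra hc; push_neg at hc
        have := hu₀S
        simp only [hSph, Set.mem_setOf_eq] at this
        rw [Finset.sum_congr rfl (fun m _ => by rw [hc m, abs_zero])] at this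
        simp at this
      intro hc
      apply hm₁
      have := congrArg (MvPolynomial.coeff (dEmb D d m₁)) hc
      rw [hP] at this
      simp only [MvPolynomial.coeff_zero] at this
      rw [← this, MvPolynomial.coeff_sum]
      rw [Finset.sum_eq_single m₁ (fun m _ hne => by
          rw [MvPolynomial.coeff_monomial, if_neg (fun h => hne (dEmb_inj D d h))])
        (fun h => absurd (Finset.mem_univ m₁) h)]
      rw [MvPolynomial.coeff_monomial, if_pos rfl]
    -- null sets
    have hnull1 : volume {y : EuclideanSpace ℝ (Fin D) |
        MvPolynomial.eval (fun i => y i) P = 0} = 0 := mvpoly_null_euclid D P hPne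
    have hgmeas : MeasurableSet {y : EuclideanSpace ℝ (Fin D) |
        ¬ (∑ m : DIdx D d, u₀ m * Qm D d m y)^2 = 0} :=
      ((isClosed_eq (hg.pow 2) continuous_const).measurableSet).compl
    have hnull2 : volume ({y : EuclideanSpace ℝ (Fin D) |
        ¬ (∑ m : DIdx D d, u₀ m * Qm D d m y)^2 = 0} ∩ Ω) = 0 := by
      have h2 := hzero
      rw [Filter.EventuallyEq, ae_iff] at h2
      simp only [Pi.zero_apply] at h2
      rwa [Measure.restrict_apply hgmeas] at h2
    have hsub : Ω ⊆ {y : EuclideanSpace ℝ (Fin D) | MvPolynomial.eval (fun i => y i) P = 0}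
        ∪ ({y : EuclideanSpace ℝ (Fin D) |
            ¬ (∑ m : DIdx D d, u₀ m * Qm D d m y)^2 = 0} ∩ Ω) := by
      intro y hy
      by_cases hfy : (∑ m : DIdx D d, u₀ m * Qm D d m y)^2 = 0
      · left
        rw [Set.mem_setOf_eq, hPeval]
        exact pow_eq_zero_iff (n := 2) (by norm_num) |>.mp hfy
      · right; exact ⟨hfy, hy⟩
    have : volume Ω = 0 := by
      refine le_antisymm ?_ (by simp)
      calc volume Ω ≤ volume _ := measure_mono hsub
        _ ≤ volume {y : EuclideanSpace ℝ (Fin D) | MvPolynomial.eval (fun i => y i) P = 0}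
            + volume ({y : EuclideanSpace ℝ (Fin D) |
              ¬ (∑ m : DIdx D d, u₀ m * Qm D d m y)^2 = 0} ∩ Ω) := measure_union_le _ _
        _ = 0 := by rw [hnull1, hnull2, add_zero]
    rw [this] at hvol
    simp at hvol
  refine ⟨Φ u₀, hαpos, fun u => ?_⟩
  by_cases hu : ∑ m : DIdx D d, |u m| = 0
  · have hum : ∀ m, u m = 0 := by
      intro m
      have h1 := Finset.single_le_sum (f := fun m => |u m|) (fun _ _ => abs_nonneg _)
        (Finset.mem_univ m)
      rw [hu] at h1
      exact abs_eq_zero.mp (le_antisymm h1 (abs_nonneg _))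
    rw [hu]
    have hz : ∑ m : DIdx D d, ∑ m' : DIdx D d, u m * u m' * Amat D d Ω m m' = 0 :=
      Finset.sum_eq_zero fun m _ => Finset.sum_eq_zero fun m' _ => by
        rw [hum m, zero_mul, zero_mul]
    rw [hz]
    norm_num
  · have he : 0 < ∑ m : DIdx D d, |u m| :=
      lt_of_le_of_ne (Finset.sum_nonneg fun _ _ => abs_nonneg _) (Ne.symm hu)
    set e := ∑ m : DIdx D d, |u m| with hedef
    have hmem : (fun m => u m / e) ∈ Sph := by
      simp only [hSph, Set.mem_setOf_eq, abs_div, abs_of_pos he]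
      rw [← Finset.sum_div, ← hedef, div_self (ne_of_gt he)]
    have hmin' : Φ u₀ ≤ Φ (fun m => u m / e) := (isMinOn_iff.mp hmin) _ hmem
    have hscale : Φ (fun m => u m / e) = Φ u / e^2 := by
      simp only [hΦ]
      rw [Finset.sum_div]
      refine Finset.sum_congr rfl fun m _ => ?_
      rw [Finset.sum_div]
      refine Finset.sum_congr rfl fun m' _ => ?_
      rw [div_mul_div_comm, div_mul_eq_mul_div, ← sq]
    rw [hscale] at hmin'
    have := (le_div_iff₀ (by positivity : (0:ℝ) < e^2)).mp hmin'
    exact this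

/-- **Convergence of discrete orthonormal polynomials' continuous Gram matrix.**
If the discrete inner products of polynomials of degree at most `d` converge to the
continuous ones (as holds for equidistributed points), and for each `N ≥ 1` the family
`p₁⁽ᴺ⁾, …, p_K⁽ᴺ⁾` is discretely orthonormal, then
`∫_Ω pₖ⁽ᴺ⁾ p_l⁽ᴺ⁾ → δₖₗ` as `N → ∞`. -/
theorem dops_continuous_gram_tendsto_delta
    (D d K : ℕ) (Ω : Set (EuclideanSpace ℝ (Fin D)))
    (hΩmeas : MeasurableSet Ω) (hΩbd : Bornology.IsBounded Ω)
    (hvol : 0 < (volume Ω).toReal)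
    (x : ℕ → EuclideanSpace ℝ (Fin D)) (hx : ∀ n, x n ∈ Ω)
    (hconv : ∀ u v : MvPolynomial (Fin D) ℝ, u.totalDegree ≤ d → v.totalDegree ≤ d →
      Tendsto (fun N : ℕ =>
          ((volume Ω).toReal / N) * ∑ n ∈ Finset.range N,
            MvPolynomial.eval (fun i => x n i) u * MvPolynomial.eval (fun i => x n i) v)
        atTop
        (nhds (∫ y in Ω, MvPolynomial.eval (fun i => y i) u *
          MvPolynomial.eval (fun i => y i) v)))
    (p : ℕ → Fin K → MvPolynomial (Fin D) ℝ)
    (hdeg : ∀ N k, (p N k).totalDegree ≤ d)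
    (horth : ∀ N : ℕ, 1 ≤ N → ∀ k l : Fin K,
      ((volume Ω).toReal / N) * ∑ n ∈ Finset.range N,
          MvPolynomial.eval (fun i => x n i) (p N k) *
            MvPolynomial.eval (fun i => x n i) (p N l)
        = if k = l then 1 else 0) :
    ∀ k l : Fin K,
      Tendsto (fun N : ℕ =>
          ∫ y in Ω, MvPolynomial.eval (fun i => y i) (p N k) *
            MvPolynomial.eval (fun i => y i) (p N l))
        atTop (nhds (if k = l then 1 else 0)) := by
  intro k l
  classical
  have hQdeg : ∀ m : DIdx D d, (MvPolynomial.monomial (dEmb D d m) (1:ℝ)).totalDegree ≤ d := by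
    intro m
    rw [MvPolynomial.totalDegree_monomial _ one_ne_zero]
    exact dEmb_deg D d m
  have hconv' : ∀ m m' : DIdx D d,
      Tendsto (fun N => amat D d Ω x N m m') atTop (nhds (Amat D d Ω m m')) :=
    fun m m' => hconv _ _ (hQdeg m) (hQdeg m')
  set E : ℕ → ℝ := fun N => ∑ m : DIdx D d, ∑ m' : DIdx D d,
    |Amat D d Ω m m' - amat D d Ω x N m m'| with hE
  have hEconv : Tendsto E atTop (nhds 0) := by
    have h : Tendsto (fun N => ∑ m : DIdx D d, ∑ m' : DIdx D d,
        |Amat D d Ω m m' - amat D d Ω x N m m'|) atTop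
        (nhds (∑ m : DIdx D d, ∑ m' : DIdx D d, (0:ℝ))) := by
      refine tendsto_finset_sum _ fun m _ => ?_
      refine tendsto_finset_sum _ fun m' _ => ?_
      have h0 := ((tendsto_const_nhds (x := Amat D d Ω m m') (f := atTop)).sub
        (hconv' m m')).abs
      simpa using h0
    simpa using h
  have hEnonneg : ∀ N, 0 ≤ E N :=
    fun N => Finset.sum_nonneg fun m _ => Finset.sum_nonneg fun m' _ => abs_nonneg _
  obtain ⟨α, hα, hquad⟩ := gram_posdef D d Ω hΩmeas hΩbd hvol
  set c : ℕ → Fin K → DIdx D d → ℝ :=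
    fun N j m => MvPolynomial.coeff (dEmb D d m) (p N j) with hc
  have hexp : ∀ N (j : Fin K) (y : EuclideanSpace ℝ (Fin D)),
      MvPolynomial.eval (fun i => y i) (p N j) = ∑ m : DIdx D d, c N j m * Qm D d m y :=
    fun N j y => evalExpand D d (p N j) (hdeg N j) _
  -- the key bilinear bound
  have hbil : ∀ (u v : DIdx D d → ℝ) (M : DIdx D d → DIdx D d → ℝ),
      |∑ m : DIdx D d, ∑ m' : DIdx D d, u m * v m' * M m m'|
        ≤ (∑ m : DIdx D d, ∑ m' : DIdx D d, |M m m'|)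
            * ((∑ m : DIdx D d, |u m|) * (∑ m : DIdx D d, |v m|)) := by
    intro u v M
    have hsu : ∀ m : DIdx D d, |u m| ≤ ∑ m'' : DIdx D d, |u m''| :=
      fun m => Finset.single_le_sum (f := fun m => |u m|) (fun _ _ => abs_nonneg _)
        (Finset.mem_univ m)
    have hsv : ∀ m : DIdx D d, |v m| ≤ ∑ m'' : DIdx D d, |v m''| :=
      fun m => Finset.single_le_sum (f := fun m => |v m|) (fun _ _ => abs_nonneg _)
        (Finset.mem_univ m)
    have hsunn : (0:ℝ) ≤ ∑ m'' : DIdx D d, |u m''| :=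
      Finset.sum_nonneg fun _ _ => abs_nonneg _
    have hsvnn : (0:ℝ) ≤ ∑ m'' : DIdx D d, |v m''| :=
      Finset.sum_nonneg fun _ _ => abs_nonneg _
    refine le_trans (Finset.abs_sum_le_sum_abs _ _) ?_
    refine le_trans (Finset.sum_le_sum fun m _ => Finset.abs_sum_le_sum_abs _ _) ?_
    rw [Finset.sum_mul]
    refine Finset.sum_le_sum fun m _ => ?_
    rw [Finset.sum_mul]
    refine Finset.sum_le_sum fun m' _ => ?_
    rw [abs_mul, abs_mul]
    calc |u m| * |v m'| * |M m m'|
        ≤ (∑ m'' : DIdx D d, |u m''|) * (∑ m'' : DIdx D d, |v m''|) * |M m m'| := by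
          apply mul_le_mul_of_nonneg_right _ (abs_nonneg _)
          exact mul_le_mul (hsu m) (hsv m') (abs_nonneg _) hsunn
      _ = |M m m'| * ((∑ m'' : DIdx D d, |u m''|) * (∑ m'' : DIdx D d, |v m''|)) := by ring
  -- the continuous Gram identity
  have hGram : ∀ N (j j' : Fin K),
      (∫ y in Ω, MvPolynomial.eval (fun i => y i) (p N j) *
          MvPolynomial.eval (fun i => y i) (p N j'))
        = ∑ m : DIdx D d, ∑ m' : DIdx D d, c N j m * c N j' m' * Amat D d Ω m m' := by
    intro N j j'
    rw [← gram_int D d Ω hΩbd (c N j) (c N j')]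
    apply integral_congr_ae
    filter_upwards with y
    rw [hexp N j y, hexp N j' y]
  -- the discrete Gram identity
  have hDisc : ∀ N, 1 ≤ N → ∀ (j j' : Fin K),
      ∑ m : DIdx D d, ∑ m' : DIdx D d, c N j m * c N j' m' * amat D d Ω x N m m'
        = if j = j' then 1 else 0 := by
    intro N hN j j'
    rw [← gram_disc D d Ω x N (c N j) (c N j')]
    rw [← horth N hN j j']
    congr 1
    refine Finset.sum_congr rfl fun n _ => ?_
    rw [hexp N j (x n), hexp N j' (x n)]
  -- eventual coefficient bound
  have hEbound : ∀ᶠ N in atTop, ∀ j : Fin K,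
      (∑ m : DIdx D d, |c N j m|) * (∑ m : DIdx D d, |c N j m|) ≤ 2 / α := by
    filter_upwards [hEconv.eventually_le_const (by positivity : (0:ℝ) < α/2),
      eventually_ge_atTop 1] with N hEN hN1
    intro j
    have h1 : α * (∑ m : DIdx D d, |c N j m|)^2
        ≤ ∑ m : DIdx D d, ∑ m' : DIdx D d, c N j m * c N j m' * Amat D d Ω m m' :=
      hquad (c N j)
    have h2 : ∑ m : DIdx D d, ∑ m' : DIdx D d, c N j m * c N j m' * Amat D d Ω m m'
        = 1 + ∑ m : DIdx D d, ∑ m' : DIdx D d,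
            c N j m * c N j m' * (Amat D d Ω m m' - amat D d Ω x N m m') := by
      have hsplit : ∀ (m m' : DIdx D d),
          c N j m * c N j m' * Amat D d Ω m m'
            = c N j m * c N j m' * amat D d Ω x N m m'
              + c N j m * c N j m' * (Amat D d Ω m m' - amat D d Ω x N m m') := by
        intro m m'; ring
      simp only [hsplit, Finset.sum_add_distrib]
      rw [hDisc N hN1 j j, if_pos rfl]
    have h3 : |∑ m : DIdx D d, ∑ m' : DIdx D d,
          c N j m * c N j m' * (Amat D d Ω m m' - amat D d Ω x N m m')|
        ≤ E N * ((∑ m : DIdx D d, |c N j m|) * (∑ m : DIdx D d, |c N j m|)) :=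
      hbil (c N j) (c N j) _
    have h4 : E N ≤ α / 2 := hEN
    have hsnn : (0:ℝ) ≤ ∑ m : DIdx D d, |c N j m| :=
      Finset.sum_nonneg fun _ _ => abs_nonneg _
    have h5 := le_trans (le_abs_self _) h3
    have h6 : E N * ((∑ m : DIdx D d, |c N j m|) * (∑ m : DIdx D d, |c N j m|))
        ≤ (α/2) * ((∑ m : DIdx D d, |c N j m|) * (∑ m : DIdx D d, |c N j m|)) :=
      mul_le_mul_of_nonneg_right h4 (mul_nonneg hsnn hsnn)
    rw [le_div_iff₀ hα]
    nlinarith [h1, h2, h5, h6]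
  -- conclusion
  rw [← tendsto_sub_nhds_zero_iff]
  refine squeeze_zero_norm' (a := fun N => E N * (2/α)) ?_ ?_
  · filter_upwards [hEbound, eventually_ge_atTop 1] with N hb hN1
    rw [Real.norm_eq_abs, hGram N k l, ← hDisc N hN1 k l]
    have hdiff : (∑ m : DIdx D d, ∑ m' : DIdx D d, c N k m * c N l m' * Amat D d Ω m m')
        - (∑ m : DIdx D d, ∑ m' : DIdx D d, c N k m * c N l m' * amat D d Ω x N m m')
        = ∑ m : DIdx D d, ∑ m' : DIdx D d,
            c N k m * c N l m' * (Amat D d Ω m m' - amat D d Ω x N m m') := by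
      rw [← Finset.sum_sub_distrib]
      refine Finset.sum_congr rfl fun m _ => ?_
      rw [← Finset.sum_sub_distrib]
      exact Finset.sum_congr rfl fun m' _ => by ring
    rw [hdiff]
    refine le_trans (hbil (c N k) (c N l) _) ?_
    have hk := hb k
    have hl := hb l
    have hsk : (0:ℝ) ≤ ∑ m : DIdx D d, |c N k m| :=
      Finset.sum_nonneg fun _ _ => abs_nonneg _
    have hsl : (0:ℝ) ≤ ∑ m : DIdx D d, |c N l m| :=
      Finset.sum_nonneg fun _ _ => abs_nonneg _
    have hprod : (∑ m : DIdx D d, |c N k m|) * (∑ m : DIdx D d, |c N l m|) ≤ 2/α := by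
      nlinarith [hα]
    have := mul_le_mul_of_nonneg_left hprod (hEnonneg N)
    linarith
  · have := hEconv.mul_const (2/α)
    simpa using this
end

section
/- Let Ω ⊆ ℝ^D be measurable and let ω : Ω → ℝ be nonnegative, integrable, and essentially bounded, with ‖I‖_∞ = ∫_Ω ω(x) dx. For each N ∈ ℕ let w^{(N)}, ŵ^{(N)} ∈ ℝ^N and let T_N : Ω → ℝ^N be measurable with each component (T_N)_n·ω integrable and x ↦ Σ_{n=1}^N |(T_N(x))_n| integrable, such that w_n^{(N)} = ŵ_n^{(N)} − ∫_Ω (T_N(x))_n ω(x) dx for all n = 1,…,N (the relation between the weights of the polynomial-augmented RBF quadrature and the pure RBF quadrature, with T_N = Bτ). Assume lim_{N→∞} ∫_Ω Σ_{n=1}^N |(T_N(x))_n| dx = 0. Then lim_{N→∞} Σ_{n=1}^N |ŵ_n^{(N)}| = ‖I‖_∞ if and only if lim_{N→∞} Σ_{n=1}^N |w_n^{(N)}| = ‖I‖_∞; that is, either both the pure and the polynomial-augmented RBF quadrature formulas are asymptotically stable or neither is. -/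
open MeasureTheory Filter

/-- **Asymptotic stability is independent of polynomial augmentation.**
If the weights of the polynomial-augmented RBF quadrature and the pure RBF quadrature are
related by `wₙ⁽ᴺ⁾ = ŵₙ⁽ᴺ⁾ − ∫_Ω (T_N(x))ₙ ω(x) dx` and
`∫_Ω Σₙ |(T_N(x))ₙ| dx → 0`, then `Σₙ |ŵₙ⁽ᴺ⁾| → ‖I‖_∞` iff `Σₙ |wₙ⁽ᴺ⁾| → ‖I‖_∞`:
either both quadrature sequences are asymptotically stable or neither is. -/
theorem asymptotic_stability_independent_of_polynomials
    (D : ℕ) (Ω : Set (EuclideanSpace ℝ (Fin D))) (hΩ : MeasurableSet Ω)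
    (ω : EuclideanSpace ℝ (Fin D) → ℝ)
    (hω0 : ∀ y ∈ Ω, 0 ≤ ω y) (hωint : IntegrableOn ω Ω)
    (hωbd : ∃ M, ∀ᵐ y ∂(volume.restrict Ω), ω y ≤ M)
    (w what : (N : ℕ) → Fin N → ℝ)
    (T : (N : ℕ) → EuclideanSpace ℝ (Fin D) → Fin N → ℝ)
    (hTmeas : ∀ N (n : Fin N), Measurable fun y => T N y n)
    (hTint : ∀ N (n : Fin N), IntegrableOn (fun y => T N y n * ω y) Ω)
    (hTl1int : ∀ N : ℕ, IntegrableOn (fun y => ∑ n : Fin N, |T N y n|) Ω)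
    (hrel : ∀ N (n : Fin N), w N n = what N n - ∫ y in Ω, T N y n * ω y)
    (hTlim : Tendsto (fun N : ℕ => ∫ y in Ω, ∑ n : Fin N, |T N y n|) atTop (nhds 0)) :
    Tendsto (fun N : ℕ => ∑ n : Fin N, |what N n|) atTop (nhds (∫ y in Ω, ω y)) ↔
      Tendsto (fun N : ℕ => ∑ n : Fin N, |w N n|) atTop (nhds (∫ y in Ω, ω y)) := by
  obtain ⟨M, hM⟩ := hωbd
  set M' := max M 0 with hM'def
  have hM'0 : (0:ℝ) ≤ M' := le_max_right _ _
  have hMae : ∀ᵐ y ∂(volume.restrict Ω), ω y ≤ M' :=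
    hM.mono fun y h => h.trans (le_max_left _ _)
  have hmem : ∀ᵐ y ∂(volume.restrict Ω), y ∈ Ω := ae_restrict_mem hΩ
  have key : ∀ N : ℕ, abs ((∑ n : Fin N, |what N n|) - ∑ n : Fin N, |w N n|) ≤
      M' * ∫ y in Ω, ∑ n : Fin N, |T N y n| := by
    intro N
    have h1 : abs ((∑ n : Fin N, |what N n|) - ∑ n : Fin N, |w N n|) ≤
        ∑ n : Fin N, |what N n - w N n| := by
      rw [← Finset.sum_sub_distrib]
      exact (Finset.abs_sum_le_sum_abs _ _).trans
        (Finset.sum_le_sum fun n _ => abs_abs_sub_abs_le_abs_sub _ _)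
    have h2 : ∑ n : Fin N, |what N n - w N n| ≤
        ∑ n : Fin N, ∫ y in Ω, |T N y n * ω y| := by
      refine Finset.sum_le_sum fun n _ => ?_
      rw [hrel N n, sub_sub_cancel]
      simpa [abs_mul] using norm_integral_le_integral_norm (μ := volume.restrict Ω)
        fun y => T N y n * ω y
    have h3 : ∑ n : Fin N, ∫ y in Ω, |T N y n * ω y| =
        ∫ y in Ω, ∑ n : Fin N, |T N y n * ω y| := by
      rw [integral_finset_sum]
      intro n _
      exact (hTint N n).abs
    have h4 : (∫ y in Ω, ∑ n : Fin N, |T N y n * ω y|) ≤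
        ∫ y in Ω, M' * ∑ n : Fin N, |T N y n| := by
      refine integral_mono_ae (integrable_finset_sum _ fun n _ => (hTint N n).abs)
        ((hTl1int N).const_mul M') ?_
      filter_upwards [hmem, hMae] with y hy hMy
      rw [Finset.mul_sum]
      refine Finset.sum_le_sum fun n _ => ?_
      rw [abs_mul, abs_of_nonneg (hω0 y hy)]
      calc |T N y n| * ω y ≤ |T N y n| * M' :=
            mul_le_mul_of_nonneg_left hMy (abs_nonneg _)
        _ = M' * |T N y n| := mul_comm _ _
    have h5 : (∫ y in Ω, M' * ∑ n : Fin N, |T N y n|) =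
        M' * ∫ y in Ω, ∑ n : Fin N, |T N y n| := integral_const_mul _ _
    exact h1.trans (h2.trans (h3.le.trans (h4.trans h5.le)))
  have hd : Tendsto (fun N : ℕ => M' * ∫ y in Ω, ∑ n : Fin N, |T N y n|)
      atTop (nhds 0) := by
    simpa using hTlim.const_mul M'
  have hdiff : Tendsto (fun N : ℕ => (∑ n : Fin N, |what N n|) - ∑ n : Fin N, |w N n|)
      atTop (nhds 0) := squeeze_zero_norm key hd
  constructor
  · intro h
    have := h.sub hdiff
    simpa using this
  · intro h
    have := hdiff.add h
    simpa using this
end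

section
/- Let α > 0 and β ≥ 0. Then the integral of the cubic polyharmonic spline kernel φ(r) = r³, with r = ‖(x,y)‖₂ = √(x² + y²), over the right triangle with vertices (0,0), (α,0), and (α,β) satisfies ∫_0^α ∫_0^{(β/α)x} (x² + y²)^{3/2} dy dx = (α/40) ( 3 α⁴ · arsinh(β/α) + β (5α² + 2β²) √(α² + β²) ), where arsinh denotes the inverse hyperbolic sine. -/
open Real intervalIntegral

lemma rpow_three_halves (a : ℝ) (ha : 0 ≤ a) : a ^ ((3:ℝ)/2) = Real.sqrt a ^ 3 := by
  rw [Real.sqrt_eq_rpow, ← Real.rpow_natCast (a ^ ((1:ℝ)/2)) 3, ← Real.rpow_mul ha]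
  norm_num

lemma sqrt_deriv (x : ℝ) (hx : 0 < x) (y : ℝ) :
    HasDerivAt (fun y : ℝ => Real.sqrt (x ^ 2 + y ^ 2)) (y / Real.sqrt (x ^ 2 + y ^ 2)) y := by
  have hpos : 0 < x ^ 2 + y ^ 2 := by positivity
  have h1 : HasDerivAt (fun y : ℝ => x ^ 2 + y ^ 2) (2 * y) y := by
    simpa using ((hasDerivAt_pow 2 y).const_add (x ^ 2))
  have := (Real.hasDerivAt_sqrt (ne_of_gt hpos)).comp y h1
  refine this.congr_deriv ?_
  have hs : 0 < Real.sqrt (x ^ 2 + y ^ 2) := Real.sqrt_pos.mpr hpos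
  field_simp

lemma inner_deriv (x : ℝ) (hx : 0 < x) (y : ℝ) :
    HasDerivAt (fun y : ℝ => y * Real.sqrt (x ^ 2 + y ^ 2) ^ 3 / 4 +
        3 * x ^ 2 / 8 * (y * Real.sqrt (x ^ 2 + y ^ 2) + x ^ 2 * Real.arsinh (y / x)))
      (Real.sqrt (x ^ 2 + y ^ 2) ^ 3) y := by
  have hpos : 0 < x ^ 2 + y ^ 2 := by positivity
  set s := Real.sqrt (x ^ 2 + y ^ 2) with hs_def
  have hs : 0 < s := Real.sqrt_pos.mpr hpos
  have hs2 : s ^ 2 = x ^ 2 + y ^ 2 := Real.sq_sqrt hpos.le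
  have hsd := sqrt_deriv x hx y
  have h1 : HasDerivAt (fun y : ℝ => y * Real.sqrt (x ^ 2 + y ^ 2) ^ 3 / 4)
      ((1 * s ^ 3 + y * (3 * s ^ 2 * (y / s))) / 4) y :=
    ((hasDerivAt_id y).mul (hsd.pow 3)).div_const 4
  have h2 : HasDerivAt (fun y : ℝ => y * Real.sqrt (x ^ 2 + y ^ 2))
      (1 * s + y * (y / s)) y := (hasDerivAt_id y).mul hsd
  have hdiv : HasDerivAt (fun y : ℝ => y / x) (1 / x) y := by
    simpa using (hasDerivAt_id y).div_const x
  have h3 : HasDerivAt (fun y : ℝ => Real.arsinh (y / x))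
      ((Real.sqrt (1 + (y / x) ^ 2))⁻¹ * (1 / x)) y :=
    HasDerivAt.comp (h₂ := Real.arsinh) (h := fun y : ℝ => y / x) y (Real.hasDerivAt_arsinh (y / x)) hdiv
  have hsq : Real.sqrt (1 + (y / x) ^ 2) = s / x := by
    rw [show 1 + (y / x) ^ 2 = (x ^ 2 + y ^ 2) / x ^ 2 by field_simp,
      Real.sqrt_div hpos.le, Real.sqrt_sq hx.le]
  rw [hsq] at h3
  have := h1.add (((h2.add (h3.const_mul (x ^ 2)))).const_mul (3 * x ^ 2 / 8))
  refine this.congr_deriv ?_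
  have hs3 : s ^ 3 = (x ^ 2 + y ^ 2) * s := by
    rw [pow_succ, hs2]
  rw [hs3, hs2]
  field_simp
  linear_combination (-12*x^2 - 24*y^2) * hs2

lemma inner_int (x : ℝ) (hx : 0 < x) (c : ℝ) (hc : 0 ≤ c) :
    (∫ y in (0:ℝ)..(c * x), (x ^ 2 + y ^ 2) ^ ((3:ℝ)/2)) =
      x ^ 4 * (c * Real.sqrt (1 + c ^ 2) ^ 3 / 4 + 3 * c * Real.sqrt (1 + c ^ 2) / 8 +
        3 * Real.arsinh c / 8) := by
  have hcongr : (∫ y in (0:ℝ)..(c * x), (x ^ 2 + y ^ 2) ^ ((3:ℝ)/2)) =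
      ∫ y in (0:ℝ)..(c * x), Real.sqrt (x ^ 2 + y ^ 2) ^ 3 := by
    refine intervalIntegral.integral_congr fun y _ => ?_
    exact rpow_three_halves _ (by positivity)
  rw [hcongr]
  have hcont : ContinuousOn (fun y : ℝ => Real.sqrt (x ^ 2 + y ^ 2) ^ 3)
      (Set.uIcc 0 (c * x)) := by fun_prop
  have := intervalIntegral.integral_eq_sub_of_hasDerivAt
    (f := fun y : ℝ => y * Real.sqrt (x ^ 2 + y ^ 2) ^ 3 / 4 +
        3 * x ^ 2 / 8 * (y * Real.sqrt (x ^ 2 + y ^ 2) + x ^ 2 * Real.arsinh (y / x)))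
    (fun y _ => inner_deriv x hx y) (hcont.intervalIntegrable)
  rw [this]
  have hx2 : Real.sqrt (x ^ 2 + (c * x) ^ 2) = x * Real.sqrt (1 + c ^ 2) := by
    rw [show x ^ 2 + (c * x) ^ 2 = x ^ 2 * (1 + c ^ 2) by ring, Real.sqrt_mul (sq_nonneg x),
      Real.sqrt_sq hx.le]
  have hcx : c * x / x = c := by field_simp
  simp only [hx2, hcx, Real.sqrt_zero]
  simp [Real.arsinh_zero]
  ring

/-- Reference integral of the cubic polyharmonic spline `φ(r) = r³` over the right
triangle with vertices `(0,0)`, `(α,0)`, `(α,β)`: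
`∫₀^α ∫₀^{(β/α)x} (x² + y²)^{3/2} dy dx
  = (α/40) (3α⁴ arsinh(β/α) + β(5α² + 2β²) √(α² + β²))`. -/
theorem cubic_phs_reference_integral (α β : ℝ) (hα : 0 < α) (hβ : 0 ≤ β) :
    (∫ x in (0:ℝ)..α, ∫ y in (0:ℝ)..(β / α * x), (x ^ 2 + y ^ 2) ^ ((3:ℝ)/2)) =
      α / 40 * (3 * α ^ 4 * Real.arsinh (β / α) +
        β * (5 * α ^ 2 + 2 * β ^ 2) * Real.sqrt (α ^ 2 + β ^ 2)) := by
  set c : ℝ := β / α with hc_def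
  have hc : 0 ≤ c := div_nonneg hβ hα.le
  set K : ℝ := c * Real.sqrt (1 + c ^ 2) ^ 3 / 4 + 3 * c * Real.sqrt (1 + c ^ 2) / 8 +
      3 * Real.arsinh c / 8 with hK_def
  have houter : (∫ x in (0:ℝ)..α, ∫ y in (0:ℝ)..(c * x), (x ^ 2 + y ^ 2) ^ ((3:ℝ)/2)) =
      ∫ x in (0:ℝ)..α, K * x ^ 4 := by
    refine intervalIntegral.integral_congr fun x hx => ?_
    rw [Set.uIcc_of_le hα.le] at hx
    rcases eq_or_lt_of_le hx.1 with h0 | h0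
    · simp [← h0]
    · rw [inner_int x h0 c hc]; ring
  rw [houter, intervalIntegral.integral_const_mul, integral_pow]
  have hs1 : Real.sqrt (1 + c ^ 2) = Real.sqrt (α ^ 2 + β ^ 2) / α := by
    rw [show 1 + c ^ 2 = (α ^ 2 + β ^ 2) / α ^ 2 by rw [hc_def]; field_simp,
      Real.sqrt_div (by positivity), Real.sqrt_sq hα.le]
  set s : ℝ := Real.sqrt (α ^ 2 + β ^ 2) with hs_def
  have hs2 : s ^ 2 = α ^ 2 + β ^ 2 := Real.sq_sqrt (by positivity)
  rw [hK_def, hs1, hc_def]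
  have hβc : β / α * α = β := by field_simp
  have hs3 : s ^ 3 = (α ^ 2 + β ^ 2) * s := by
    rw [pow_succ, hs2]
  rw [div_pow, hs3]
  field_simp
  ring
end

section
/- Let α > 0 and β ≥ 0. Then the integral of the thin plate spline kernel φ(r) = r² log r, with r = ‖(x,y)‖₂ = √(x² + y²), over the right triangle with vertices (0,0), (α,0), and (α,β) satisfies ∫_0^α ∫_0^{(β/α)x} (1/2)(x² + y²) log(x² + y²) dy dx = (α/144) ( 24 α³ arctan(β/α) + 6 β (3α² + β²) log(α² + β²) − 33 α² β − 7 β³ ), where the integrand extends by the value 0 at the origin (consistent with the convention log 0 = 0). -/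
open Real intervalIntegral

private lemma tps_deriv (x : ℝ) (hx : 0 < x) (y : ℝ) :
    HasDerivAt (fun y => (1/2)*((x^2*y + y^3/3)*Real.log (x^2+y^2) - (2/9)*y^3
      - (4/3)*x^2*y + (4/3)*x^3*Real.arctan (y/x)))
      ((1/2)*(x^2+y^2)*Real.log (x^2+y^2)) y := by
  have hx2 : x^2 + y^2 ≠ 0 := by positivity
  have h1 : HasDerivAt (fun y : ℝ => x^2+y^2) (2*y) y := by
    simpa using ((hasDerivAt_pow 2 y).const_add (x^2))
  have hlog : HasDerivAt (fun y : ℝ => Real.log (x^2+y^2)) (2*y/(x^2+y^2)) y := h1.log hx2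
  have hpoly : HasDerivAt (fun y : ℝ => x^2*y + y^3/3) (x^2 + y^2) y := by
    have := ((hasDerivAt_id y).const_mul (x^2)).add ((hasDerivAt_pow 3 y).div_const 3)
    refine this.congr_deriv ?_; push_cast; ring
  have harct : HasDerivAt (fun y : ℝ => Real.arctan (y/x)) ((1/x)/(1+(y/x)^2)) y := by
    have hd : HasDerivAt (fun y : ℝ => y/x) (1/x) y := (hasDerivAt_id y).div_const x
    simpa [div_eq_mul_inv, mul_comm] using hd.arctan
  have := (((hpoly.mul hlog).sub (((hasDerivAt_pow 3 y).const_mul (2/9:ℝ)))).sub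
      ((hasDerivAt_id y).const_mul ((4/3)*x^2))).add (harct.const_mul ((4/3)*x^3))
  have h2 := this.const_mul (1/2 : ℝ)
  refine h2.congr_deriv ?_
  have h1x : 1 + (y/x)^2 ≠ 0 := by positivity
  field_simp
  ring

private lemma tps_inner (x : ℝ) (hx : 0 < x) (b : ℝ) :
    (∫ y in (0:ℝ)..b, (1/2)*(x^2+y^2)*Real.log (x^2+y^2))
      = (1/2)*((x^2*b + b^3/3)*Real.log (x^2+b^2) - (2/9)*b^3
      - (4/3)*x^2*b + (4/3)*x^3*Real.arctan (b/x)) := by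
  have hcont : Continuous fun y : ℝ => (1/2)*(x^2+y^2)*Real.log (x^2+y^2) := by
    have h0 : ∀ y : ℝ, x^2 + y^2 ≠ 0 := fun y => by positivity
    exact (continuous_const.mul (continuous_const.add (continuous_pow 2))).mul
      ((continuous_const.add (continuous_pow 2)).log h0)
  have := integral_eq_sub_of_hasDerivAt (f := fun y => (1/2)*((x^2*y + y^3/3)*Real.log (x^2+y^2)
      - (2/9)*y^3 - (4/3)*x^2*y + (4/3)*x^3*Real.arctan (y/x)))
      (fun y _ => tps_deriv x hx y) (hcont.intervalIntegrable 0 b)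
  rw [this]
  simp [Real.arctan_zero]

private lemma cont_cube_log : Continuous fun x : ℝ => x^3 * Real.log (x^2) := by
  have : (fun x : ℝ => x^3 * Real.log (x^2)) = fun x => 2 * x^2 * (x * Real.log x) := by
    funext x
    rw [Real.log_pow]
    push_cast
    ring
  rw [this]
  exact (continuous_const.mul (continuous_pow 2)).mul Real.continuous_mul_log

private lemma cube_log_integral (α : ℝ) (hα : 0 < α) :
    (∫ x in (0:ℝ)..α, x^3 * Real.log (x^2)) = α^4 * Real.log α / 2 - α^4/8 := by
  have hcontG : ContinuousOn (fun x : ℝ => x^4 * Real.log x / 2 - x^4/8) (Set.Icc 0 α) := by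
    have : (fun x : ℝ => x^4 * Real.log x / 2 - x^4/8)
        = fun x => x^3/2 * (x * Real.log x) - x^4/8 := by funext x; ring
    rw [this]
    exact (((continuous_pow 3).div_const 2).mul Real.continuous_mul_log |>.sub
      ((continuous_pow 4).div_const 8)).continuousOn
  have hderiv : ∀ x ∈ Set.Ioo (0:ℝ) α,
      HasDerivAt (fun x : ℝ => x^4 * Real.log x / 2 - x^4/8) (x^3 * Real.log (x^2)) x := by
    intro x hx
    have hx0 : x ≠ 0 := ne_of_gt hx.1
    have h := (((hasDerivAt_pow 4 x).mul (Real.hasDerivAt_log hx0)).div_const 2).sub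
      ((hasDerivAt_pow 4 x).div_const 8)
    refine h.congr_deriv ?_
    rw [Real.log_pow]
    push_cast
    field_simp
    ring
  have := integral_eq_sub_of_hasDerivAt_of_le (le_of_lt hα) hcontG hderiv
    (cont_cube_log.intervalIntegrable 0 α)
  rw [this]
  simp

/-- Reference integral of the thin plate spline `φ(r) = r² log r` over the right triangle
with vertices `(0,0)`, `(α,0)`, `(α,β)`:
`∫₀^α ∫₀^{(β/α)x} (1/2)(x² + y²) log(x² + y²) dy dx
  = (α/144) (24α³ arctan(β/α) + 6β(3α² + β²) log(α² + β²) − 33α²β − 7β³)`,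
with Mathlib's convention `Real.log 0 = 0` handling the origin. -/
theorem tps_reference_integral (α β : ℝ) (hα : 0 < α) (hβ : 0 ≤ β) :
    (∫ x in (0:ℝ)..α, ∫ y in (0:ℝ)..(β / α * x),
        (1 / 2) * (x ^ 2 + y ^ 2) * Real.log (x ^ 2 + y ^ 2)) =
      α / 144 * (24 * α ^ 3 * Real.arctan (β / α) +
        6 * β * (3 * α ^ 2 + β ^ 2) * Real.log (α ^ 2 + β ^ 2) -
        33 * α ^ 2 * β - 7 * β ^ 3) := by
  have hEq : Set.EqOn
      (fun x => ∫ y in (0:ℝ)..(β / α * x),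
        (1 / 2) * (x ^ 2 + y ^ 2) * Real.log (x ^ 2 + y ^ 2))
      (fun x => ((1/2)*(β/α + (β/α)^3/3)) * (x^3*Real.log (x^2)) +
        ((1/2)*((β/α + (β/α)^3/3)*Real.log (1+(β/α)^2) - (2/9)*(β/α)^3 - (4/3)*(β/α)
          + (4/3)*Real.arctan (β/α))) * x^3) (Set.uIcc 0 α) := by
    intro x hx
    rw [Set.uIcc_of_le hα.le] at hx
    rcases eq_or_lt_of_le hx.1 with h | h
    · simp [← h]
    · simp only
      rw [tps_inner x h (β/α*x),
        show (β/α*x)/x = β/α from mul_div_cancel_right₀ _ (ne_of_gt h),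
        show x^2 + (β/α*x)^2 = x^2*(1+(β/α)^2) by ring,
        Real.log_mul (pow_ne_zero 2 (ne_of_gt h)) (by positivity)]
      ring
  rw [intervalIntegral.integral_congr hEq]
  have hi1 : IntervalIntegrable (fun x : ℝ =>
      ((1/2)*(β/α + (β/α)^3/3)) * (x^3*Real.log (x^2))) MeasureTheory.volume 0 α :=
    (continuous_const.mul cont_cube_log).intervalIntegrable 0 α
  have hi2 : IntervalIntegrable (fun x : ℝ =>
      ((1/2)*((β/α + (β/α)^3/3)*Real.log (1+(β/α)^2) - (2/9)*(β/α)^3 - (4/3)*(β/α)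
        + (4/3)*Real.arctan (β/α))) * x^3) MeasureTheory.volume 0 α :=
    (continuous_const.mul (continuous_pow 3)).intervalIntegrable 0 α
  rw [integral_add hi1 hi2, integral_const_mul, integral_const_mul,
    cube_log_integral α hα, integral_pow,
    show α^2 + β^2 = α^2 * (1+(β/α)^2) by field_simp,
    Real.log_mul (pow_ne_zero 2 (ne_of_gt hα)) (by positivity), Real.log_pow]
  push_cast
  field_simp
  ring
end

section
/- Let α > 0 and β ≥ 0. Then the integral of the quintic polyharmonic spline kernel φ(r) = r⁵, with r = ‖(x,y)‖₂ = √(x² + y²), over the right triangle with vertices (0,0), (α,0), and (α,β) satisfies ∫_0^α ∫_0^{(β/α)x} (x² + y²)^{5/2} dy dx = (α/336) ( 15 α⁶ · arsinh(β/α) + β (33α⁴ + 26α²β² + 8β⁴) √(α² + β²) ), where arsinh denotes the inverse hyperbolic sine. -/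
open Real intervalIntegral

lemma hasDerivAt_H (t : ℝ) :
    HasDerivAt (fun t : ℝ => (8*t*Real.sqrt (1+t^2)^5 + 10*t*Real.sqrt (1+t^2)^3
      + 15*t*Real.sqrt (1+t^2) + 15*Real.arsinh t)/48) (Real.sqrt (1+t^2)^5) t := by
  have hpos : (0:ℝ) < 1 + t^2 := by positivity
  have hne : (1:ℝ) + t^2 ≠ 0 := hpos.ne'
  have hsne : Real.sqrt (1+t^2) ≠ 0 := by positivity
  have hinner : HasDerivAt (fun t : ℝ => 1 + t^2) (2*t) t := by
    simpa using ((hasDerivAt_pow 2 t).const_add 1)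
  have hs : HasDerivAt (fun t : ℝ => Real.sqrt (1+t^2)) (2*t/(2*Real.sqrt (1+t^2))) t :=
    hinner.sqrt hne
  have h5 := hs.pow 5
  have h3 := hs.pow 3
  have hA := Real.hasDerivAt_arsinh t
  have h := ((((hasDerivAt_id t).const_mul 8).mul h5).add
      (((hasDerivAt_id t).const_mul 10).mul h3)).add
      ((((hasDerivAt_id t).const_mul 15).mul hs).add (hA.const_mul 15))
  have h' := h.div_const 48
  refine HasDerivAt.congr_deriv (HasDerivAt.congr_of_eventuallyEq h' (Filter.EventuallyEq.of_eq ?_)) (Eq.symm ?_)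
  · funext x; simp only [id_eq, Pi.mul_apply, Pi.add_apply, Pi.pow_apply]; ring
  · have hsq : Real.sqrt (1+t^2)^2 = 1 + t^2 := Real.sq_sqrt hpos.le
    have hs0 : (0:ℝ) < Real.sqrt (1+t^2) := Real.sqrt_pos.mpr hpos
    simp only [id_eq, Pi.pow_apply]
    field_simp
    linear_combination (40*(Real.sqrt (1+t^2))^4 + 30*(Real.sqrt (1+t^2))^2 + 15) * hsq

lemma K_eval (c : ℝ) : (∫ t in (0:ℝ)..c, Real.sqrt (1+t^2)^5) =
    (8*c*Real.sqrt (1+c^2)^5 + 10*c*Real.sqrt (1+c^2)^3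
      + 15*c*Real.sqrt (1+c^2) + 15*Real.arsinh c)/48 := by
  rw [intervalIntegral.integral_eq_sub_of_hasDerivAt (fun t _ => hasDerivAt_H t)
    (by apply Continuous.intervalIntegrable; fun_prop)]
  simp [Real.arsinh_zero]

lemma inner_eval (c x : ℝ) (hx : 0 ≤ x) :
    (∫ y in (0:ℝ)..(c*x), Real.sqrt (x^2+y^2)^5)
      = x^6 * ∫ t in (0:ℝ)..c, Real.sqrt (1+t^2)^5 := by
  rcases hx.eq_or_lt with h | h
  · simp [← h]
  · have key := intervalIntegral.smul_integral_comp_mul_left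
      (f := fun y => Real.sqrt (x^2+y^2)^5) (a := 0) (b := c) x
    simp only [smul_eq_mul, mul_zero] at key
    rw [mul_comm c x, ← key]
    rw [show (∫ t in (0:ℝ)..c, Real.sqrt (x^2+(x*t)^2)^5)
        = ∫ t in (0:ℝ)..c, x^5 * Real.sqrt (1+t^2)^5 from ?_,
      intervalIntegral.integral_const_mul]
    · ring
    · apply intervalIntegral.integral_congr
      intro t _
      have h1 : x^2 + (x*t)^2 = x^2 * (1+t^2) := by ring
      simp only []
      rw [h1, Real.sqrt_mul (by positivity), Real.sqrt_sq h.le, mul_pow]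

lemma rpow_to_sqrt (x y : ℝ) : (x^2+y^2) ^ ((5:ℝ)/2) = Real.sqrt (x^2+y^2)^5 := by
  rw [Real.sqrt_eq_rpow, ← Real.rpow_natCast ((x^2+y^2) ^ ((1:ℝ)/2)) 5,
    ← Real.rpow_mul (by positivity)]
  norm_num

/-- Reference integral of the quintic polyharmonic spline `φ(r) = r⁵` over the right
triangle with vertices `(0,0)`, `(α,0)`, `(α,β)`:
`∫₀^α ∫₀^{(β/α)x} (x² + y²)^{5/2} dy dx
  = (α/336) (15α⁶ arsinh(β/α) + β(33α⁴ + 26α²β² + 8β⁴) √(α² + β²))`. -/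
theorem quintic_phs_reference_integral (α β : ℝ) (hα : 0 < α) (hβ : 0 ≤ β) :
    (∫ x in (0:ℝ)..α, ∫ y in (0:ℝ)..(β / α * x), (x ^ 2 + y ^ 2) ^ ((5:ℝ)/2)) =
      α / 336 * (15 * α ^ 6 * Real.arsinh (β / α) +
        β * (33 * α ^ 4 + 26 * α ^ 2 * β ^ 2 + 8 * β ^ 4) * Real.sqrt (α ^ 2 + β ^ 2)) := by
  simp only [rpow_to_sqrt]
  rw [intervalIntegral.integral_congr (g := fun x : ℝ =>
      x^6 * ∫ t in (0:ℝ)..(β/α), Real.sqrt (1+t^2)^5) ?_]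
  · rw [intervalIntegral.integral_mul_const, integral_pow, K_eval]
    have hαne : α ≠ 0 := hα.ne'
    have h1 : 1 + (β/α)^2 = (α^2+β^2)/α^2 := by field_simp
    have h2 : Real.sqrt (1 + (β/α)^2) = Real.sqrt (α^2+β^2) / α := by
      rw [h1, Real.sqrt_div (by positivity), Real.sqrt_sq hα.le]
    rw [h2]
    have hs2 : Real.sqrt (α^2+β^2) ^ 2 = α^2+β^2 := Real.sq_sqrt (by positivity)
    set s := Real.sqrt (α^2+β^2) with hsdef
    have h5 : s^5 = (α^2+β^2)^2 * s := by
      rw [show s^5 = (s^2)^2 * s by ring, hs2]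
    have h3 : s^3 = (α^2+β^2) * s := by
      rw [show s^3 = s^2 * s by ring, hs2]
    rw [div_pow, div_pow, h5, h3]
    field_simp
    ring
  · intro x hx
    have hx0 : 0 ≤ x := by
      rcases Set.mem_uIcc.mp hx with h | h
      · exact h.1
      · linarith [h.1]
    exact inner_eval (β/α) x hx0
end
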